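/- Let p be an odd prime, k ≥ 1, and let Q, t be integers with ord_p(t) < k. Then the congruence Q·x² ≡ t (mod p^k) has a solution x in Z/p^kZ if and only if ord_p(t) − ord_p(Q) is nonnegative and even, and the Legendre symbol of cop_p(Q)·cop_p(t) modulo p equals 1. -/

import Mathlib

lemma int_cop_not_dvd (p : ℕ) [Fact p.Prime] (z : ℤ) (hz : z ≠ 0) :
    ¬ (p:ℤ) ∣ z / (p:ℤ) ^ padicValInt p z := by
  intro h
  obtain ⟨c, hc⟩ := h
  have hd : (p:ℤ) ^ padicValInt p z ∣ z := padicValInt_dvd z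
  have hcan : z / (p:ℤ) ^ padicValInt p z * (p:ℤ) ^ padicValInt p z = z :=
    Int.ediv_mul_cancel hd
  have hz2 : (p:ℤ) ^ padicValInt p z * ((p:ℤ) * c) = z := by rw [← hc, mul_comm]; exact hcan
  have : (p:ℤ) ^ (padicValInt p z + 1) ∣ z :=
    ⟨c, by calc z = (p:ℤ) ^ padicValInt p z * ((p:ℤ) * c) := hz2.symm
            _ = (p:ℤ) ^ (padicValInt p z + 1) * c := by ring⟩
  rw [padicValInt_dvd_iff] at this
  omega

lemma nat_cop_not_dvd (p : ℕ) [Fact p.Prime] (n : ℕ) (hn : n ≠ 0) :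
    ¬ p ∣ n / p ^ padicValNat p n := by
  intro h
  obtain ⟨c, hc⟩ := h
  have hcan : p ^ padicValNat p n * (n / p ^ padicValNat p n) = n :=
    Nat.mul_div_cancel' pow_padicValNat_dvd
  have hz2 : p ^ padicValNat p n * (p * c) = n := by rw [← hc]; exact hcan
  exact pow_succ_padicValNat_not_dvd hn
    ⟨c, by calc n = p ^ padicValNat p n * (p * c) := hz2.symm
            _ = p ^ (padicValNat p n + 1) * c := by ring⟩

-- Hensel-type lifting for A x^2 ≡ c mod p^n, p odd, p ∤ A, p ∤ c
lemma sq_lift (p : ℕ) [Fact p.Prime] (hodd : Odd p) (A c : ℤ)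
    (hA : ¬ (p:ℤ) ∣ A) (hc : ¬ (p:ℤ) ∣ c)
    (h1 : ∃ z : ℤ, (p:ℤ) ∣ A * z ^ 2 - c) (n : ℕ) (hn : 1 ≤ n) :
    ∃ w : ℤ, (p:ℤ) ^ n ∣ A * w ^ 2 - c := by
  have hp2 : ¬ (p:ℤ) ∣ 2 := by
    intro h
    have hle := Int.le_of_dvd (by norm_num) h
    have hp1 : 1 < p := (Fact.out : p.Prime).one_lt
    have : p = 2 := by omega
    subst this
    exact (by decide : ¬ Odd 2) hodd
  induction n, hn using Nat.le_induction with
  | base => simpa using h1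
  | succ n hn ih =>
    obtain ⟨w, hw⟩ := ih
    have hw1 : (p:ℤ) ∣ A * w ^ 2 - c :=
      dvd_trans (dvd_pow_self (p:ℤ) (by omega)) hw
    have hpw : ¬ (p:ℤ) ∣ w := by
      intro hdvd
      have h2 : (p:ℤ) ∣ A * w ^ 2 := Dvd.dvd.mul_left (dvd_pow hdvd two_ne_zero) A
      exact hc (by have := dvd_sub h2 hw1; simpa using this)
    obtain ⟨d, hd⟩ := hw
    -- choose m with p ∣ d + 2*A*w*m
    have hu : ((2 * A * w : ℤ) : ZMod p) ≠ 0 := by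
      rw [Ne, ZMod.intCast_zmod_eq_zero_iff_dvd]
      intro h
      rcases (Int.Prime.dvd_mul' Fact.out h) with h' | h'
      · rcases (Int.Prime.dvd_mul' Fact.out h') with h'' | h''
        · exact hp2 h''
        · exact hA h''
      · exact hpw h'
    set m : ℤ := (((-(d : ZMod p)) * ((2 * A * w : ℤ) : ZMod p)⁻¹).val : ℤ) with hm
    have hmod : (p:ℤ) ∣ d + 2 * A * w * m := by
      rw [← ZMod.intCast_zmod_eq_zero_iff_dvd]
      push_cast [hm]
      rw [ZMod.natCast_val, ZMod.cast_id]
      have hu' : (2 * (A : ZMod p) * (w : ZMod p)) ≠ 0 := by push_cast at hu; exact hu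
      have hcan := mul_inv_cancel₀ hu'
      linear_combination (-(d : ZMod p)) * hcan
    obtain ⟨e, he⟩ := hmod
    refine ⟨w + m * (p:ℤ) ^ n, ?_⟩
    have key : A * (w + m * (p:ℤ) ^ n) ^ 2 - c =
        (p:ℤ) ^ n * (d + 2 * A * w * m) + A * m ^ 2 * ((p:ℤ) ^ n) ^ 2 := by
      have : A * w ^ 2 - c = (p:ℤ) ^ n * d := hd
      linear_combination this
    rw [key, he]
    have h2n : (p:ℤ) ^ (n + 1) ∣ ((p:ℤ) ^ n) ^ 2 := by
      rw [← pow_mul]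
      exact pow_dvd_pow _ (by omega)
    exact dvd_add ⟨e, by ring⟩ (Dvd.dvd.mul_left h2n _)

/-- for odd p, Q·x² ≡ t (mod p^k) is solvable iff
ord_p(t) − ord_p(Q) is nonnegative and even and (cop_p(Q)cop_p(t)/p) = 1. -/
theorem one_dim_representable_iff_odd_prime (p k : ℕ) [Fact p.Prime] (hodd : Odd p)
    (hk : 0 < k) (Q : ℤ) (hQ : Q ≠ 0) (t : ℕ) (ht : 0 < t) (htk : t < p ^ k)
    (hvt : padicValNat p t < k) :
    (∃ x : ZMod (p ^ k), (Q : ZMod (p ^ k)) * x ^ 2 = (t : ZMod (p ^ k))) ↔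
      padicValInt p Q ≤ padicValNat p t ∧
        Even (padicValNat p t - padicValInt p Q) ∧
        legendreSym p ((Q / (p : ℤ) ^ padicValInt p Q) *
          ((t / p ^ padicValNat p t : ℕ) : ℤ)) = 1 := by
  have hp1 : 1 < p := (Fact.out : p.Prime).one_lt
  set a := padicValInt p Q with ha
  set b := padicValNat p t with hb
  set Q' : ℤ := Q / (p:ℤ) ^ a with hQ'
  set T : ℕ := t / p ^ b with hT
  have hQeq : (p:ℤ) ^ a * Q' = Q := by
    rw [hQ']; exact Int.mul_ediv_cancel' (padicValInt_dvd Q)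
  have hTeq : p ^ b * T = t := Nat.mul_div_cancel' pow_padicValNat_dvd
  have hTeqZ : ((p:ℤ)) ^ b * (T:ℤ) = (t:ℤ) := by exact_mod_cast congrArg (Nat.cast : ℕ → ℤ) hTeq
  have hQ'nd : ¬ (p:ℤ) ∣ Q' := int_cop_not_dvd p Q hQ
  have hTnd : ¬ p ∣ T := nat_cop_not_dvd p t ht.ne'
  have hTndZ : ¬ (p:ℤ) ∣ (T:ℤ) := by exact_mod_cast fun h => hTnd (Int.ofNat_dvd.mp (by exact_mod_cast h))
  have hQ'0 : Q' ≠ 0 := fun h => hQ'nd (h ▸ dvd_zero _)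
  -- translate solvability to an integer divisibility
  have key : (∃ x : ZMod (p ^ k), (Q : ZMod (p ^ k)) * x ^ 2 = (t : ZMod (p ^ k))) ↔
      ∃ y : ℤ, (p:ℤ) ^ k ∣ Q * y ^ 2 - (t:ℤ) := by
    constructor
    · rintro ⟨x, hx⟩
      obtain ⟨y, rfl⟩ := ZMod.intCast_surjective x
      refine ⟨y, ?_⟩
      have : ((Q * y ^ 2 : ℤ) : ZMod (p ^ k)) = ((t : ℤ) : ZMod (p ^ k)) := by push_cast; exact hx
      rw [ZMod.intCast_eq_intCast_iff] at this
      rw [Int.modEq_iff_dvd] at this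
      push_cast at this
      exact dvd_sub_comm.mp this
    · rintro ⟨y, hy⟩
      refine ⟨(y : ZMod (p ^ k)), ?_⟩
      have : ((Q * y ^ 2 : ℤ) : ZMod (p ^ k)) = ((t : ℤ) : ZMod (p ^ k)) := by
        rw [ZMod.intCast_eq_intCast_iff, Int.modEq_iff_dvd]
        push_cast
        exact dvd_sub_comm.mp hy
      push_cast at this
      exact this
  rw [key]
  have hpZ0 : (p:ℤ) ≠ 0 := by exact_mod_cast (by omega : p ≠ 0)
  constructor
  · rintro ⟨y, hy⟩
    have hy0 : y ≠ 0 := by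
      rintro rfl
      have h1 : (p:ℤ) ^ k ∣ (t:ℤ) := by simpa using dvd_sub_comm.mp hy
      have h2 : p ^ k ∣ t := by exact_mod_cast h1
      exact absurd (Nat.le_of_dvd ht h2) (by omega)
    set c := padicValInt p y with hc
    set y' : ℤ := y / (p:ℤ) ^ c with hy'
    have hyeq : (p:ℤ) ^ c * y' = y := Int.mul_ediv_cancel' (padicValInt_dvd y)
    have hy'nd : ¬ (p:ℤ) ∣ y' := int_cop_not_dvd p y hy0
    have hval : padicValInt p (Q * y ^ 2) = a + 2 * c := by
      rw [show Q * y ^ 2 = Q * y * y from by ring,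
        padicValInt.mul (mul_ne_zero hQ hy0) hy0, padicValInt.mul hQ hy0, ← ha, ← hc]
      ring
    have h1 : (p:ℤ) ^ b ∣ (t:ℤ) := by
      rw [hb]; exact_mod_cast (pow_padicValNat_dvd : p ^ padicValNat p t ∣ t)
    have hdvd1 : (p:ℤ) ^ b ∣ Q * y ^ 2 := by
      have h2 : (p:ℤ) ^ b ∣ Q * y ^ 2 - (t:ℤ) :=
        dvd_trans (pow_dvd_pow _ (le_of_lt hvt)) hy
      simpa using dvd_add h2 h1
    have hnd1 : ¬ (p:ℤ) ^ (b + 1) ∣ Q * y ^ 2 := by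
      intro h
      have h2 : (p:ℤ) ^ (b + 1) ∣ Q * y ^ 2 - (t:ℤ) :=
        dvd_trans (pow_dvd_pow _ (by omega)) hy
      have h3 : (p:ℤ) ^ (b + 1) ∣ (t:ℤ) := by simpa using dvd_sub h h2
      have h4 : p ^ (b + 1) ∣ t := by exact_mod_cast h3
      exact pow_succ_padicValNat_not_dvd ht.ne' h4
    have hQy0 : Q * y ^ 2 ≠ 0 := mul_ne_zero hQ (pow_ne_zero _ hy0)
    have hble : b ≤ padicValInt p (Q * y ^ 2) := by
      rcases (padicValInt_dvd_iff b (Q * y ^ 2)).mp hdvd1 with h | h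
      · exact absurd h hQy0
      · exact h
    have hgeb : padicValInt p (Q * y ^ 2) ≤ b := by
      by_contra hlt
      exact hnd1 ((padicValInt_dvd_iff (b + 1) (Q * y ^ 2)).mpr (Or.inr (by omega)))
    have hab : b = a + 2 * c := by omega
    refine ⟨by omega, ⟨c, by omega⟩, ?_⟩
    have hfac : Q * y ^ 2 - (t:ℤ) = (p:ℤ) ^ b * (Q' * y' ^ 2 - (T:ℤ)) := by
      rw [← hQeq, ← hyeq, ← hTeqZ, hab]; ring
    have hdk : (p:ℤ) ^ (k - b) ∣ Q' * y' ^ 2 - (T:ℤ) := by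
      have h5 : (p:ℤ) ^ b * (p:ℤ) ^ (k - b) ∣ (p:ℤ) ^ b * (Q' * y' ^ 2 - (T:ℤ)) := by
        rw [← pow_add, show b + (k - b) = k from by omega, ← hfac]; exact hy
      exact (mul_dvd_mul_iff_left (pow_ne_zero b hpZ0)).mp h5
    have hd1 : (p:ℤ) ∣ Q' * y' ^ 2 - (T:ℤ) :=
      dvd_trans (dvd_pow_self _ (by omega : k - b ≠ 0)) hdk
    have hcast : ((Q' * (T:ℤ) : ℤ) : ZMod p) = (((Q' * y') ^ 2 : ℤ) : ZMod p) := by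
      have h0 : ((Q' * y' ^ 2 - (T:ℤ) : ℤ) : ZMod p) = 0 :=
        (ZMod.intCast_zmod_eq_zero_iff_dvd _ p).mpr hd1
      push_cast at h0 ⊢
      linear_combination (-((Q':ℤ) : ZMod p)) * h0
    have hQ'y'nd : (((Q' * y' : ℤ)) : ZMod p) ≠ 0 := by
      rw [Ne, ZMod.intCast_zmod_eq_zero_iff_dvd]
      intro h
      rcases Int.Prime.dvd_mul' Fact.out h with h | h
      · exact hQ'nd h
      · exact hy'nd h
    calc legendreSym p (Q' * (T:ℤ)) = legendreSym p ((Q' * y') ^ 2) := by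
          unfold legendreSym; rw [hcast]
      _ = 1 := legendreSym.sq_one' p hQ'y'nd
  · rintro ⟨hab, heven, hleg⟩
    obtain ⟨c, hc⟩ := heven
    have hb' : b = a + 2 * c := by omega
    have hQT0 : ((Q' * (T:ℤ) : ℤ) : ZMod p) ≠ 0 := by
      rw [Ne, ZMod.intCast_zmod_eq_zero_iff_dvd]
      intro h
      rcases Int.Prime.dvd_mul' Fact.out h with h | h
      · exact hQ'nd h
      · exact hTndZ h
    obtain ⟨s, hs⟩ := (legendreSym.eq_one_iff p hQT0).mp hleg
    have hQ'c : ((Q':ℤ) : ZMod p) ≠ 0 := by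
      rw [Ne, ZMod.intCast_zmod_eq_zero_iff_dvd]; exact hQ'nd
    have hbase : ∃ z : ℤ, (p:ℤ) ∣ Q' * z ^ 2 - (T:ℤ) := by
      refine ⟨(((s * ((Q':ℤ) : ZMod p)⁻¹).val : ℕ) : ℤ), ?_⟩
      rw [← ZMod.intCast_zmod_eq_zero_iff_dvd]
      push_cast
      rw [ZMod.natCast_val, ZMod.cast_id, sub_eq_zero]
      push_cast at hs
      field_simp
      linear_combination (-1 : ZMod p) * hs
    obtain ⟨w, hw⟩ := sq_lift p hodd Q' (T:ℤ) hQ'nd hTndZ hbase (k - b) (by omega)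
    refine ⟨(p:ℤ) ^ c * w, ?_⟩
    have hfac : Q * ((p:ℤ) ^ c * w) ^ 2 - (t:ℤ) = (p:ℤ) ^ b * (Q' * w ^ 2 - (T:ℤ)) := by
      rw [← hQeq, ← hTeqZ, hb']; ring
    rw [hfac, show k = b + (k - b) from by omega, pow_add]
    exact mul_dvd_mul_left _ hw
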